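/- Let h_t = 1 − e^{2πit/n} for t = 1,…,n and let τ ≥ 1 be an integer. Then for every Fourier frequency λ_j = 2πj/n with j an integer such that 1 ≤ j ≤ ⌊(n−1)/2⌋, one has Σ_{t=1}^n h_t^τ e^{itλ_j} = 0 whenever j ≤ ⌊(n−1)/2⌋ − τ. In particular the tapered DFT at such Fourier frequencies is invariant to addition of a constant to the data. -/

import Mathlib

open Real Complex Finset


lemma hc_geom_zero (n m : ℕ) (h1 : 1 ≤ m) (h2 : m < n) :
    ∑ t ∈ Finset.Icc 1 n, (Complex.exp (2 * π * Complex.I * m / n)) ^ t = 0 := by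
  set u : ℂ := Complex.exp (2 * π * Complex.I * m / n) with hu
  have hn0 : (n : ℂ) ≠ 0 := Nat.cast_ne_zero.mpr (by omega)
  have h2pi : (2 * π * Complex.I : ℂ) ≠ 0 := by
    simp [Real.pi_ne_zero, Complex.I_ne_zero]
  have hun : u ^ n = 1 := by
    rw [hu, ← Complex.exp_nat_mul]
    have : (n : ℂ) * (2 * π * Complex.I * m / n) = m * (2 * π * Complex.I) := by
      field_simp
    rw [this, Complex.exp_nat_mul_two_pi_mul_I]
  have hu1 : u ≠ 1 := by
    intro h
    rw [hu, Complex.exp_eq_one_iff] at h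
    obtain ⟨k, hk⟩ := h
    have hm : (m : ℂ) = k * n := by
      apply mul_left_cancel₀ h2pi
      field_simp at hk
      linear_combination (2 * π * Complex.I) * hk
    have hmz : (m : ℤ) = k * n := by exact_mod_cast hm
    have h1' : (1 : ℤ) ≤ m := by exact_mod_cast h1
    have h2' : (m : ℤ) < n := by exact_mod_cast h2
    rcases le_or_gt k 0 with hk0 | hk0
    · have : k * (n : ℤ) ≤ 0 :=
        mul_nonpos_of_nonpos_of_nonneg hk0 (by positivity)
      linarith
    · have : (n : ℤ) ≤ k * n :=
        le_mul_of_one_le_left (by positivity) hk0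
      linarith
  have hgeo : ∑ t ∈ Finset.range (n + 1), u ^ t = 1 := by
    rw [geom_sum_eq hu1, pow_succ, hun, one_mul, div_self (sub_ne_zero.mpr hu1)]
  have hins : Finset.range (n + 1) = insert 0 (Finset.Icc 1 n) := by
    ext t
    simp only [Finset.mem_range, Finset.mem_insert, Finset.mem_Icc, Nat.lt_succ_iff]
    omega
  rw [hins, Finset.sum_insert (by simp)] at hgeo
  simpa using hgeo

/-- For the Hurvich–Chen taper `h_t = 1 − e^{2πit/n}` of order `τ ≥ 1`, the tapered
Fourier transform vanishes at Fourier frequencies `λ_j = 2πj/n` with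
`1 ≤ j ≤ ⌊(n−1)/2⌋ − τ`; in particular the tapered DFT at such frequencies is
invariant to addition of a constant to the data. -/
theorem hurvich_chen_taper_orthogonality
    (n τ j : ℕ) (hn : 1 ≤ n) (hτ : 1 ≤ τ) (hj1 : 1 ≤ j) (hj2 : j + τ ≤ (n - 1) / 2) :
    (∑ t ∈ Finset.Icc 1 n,
        (1 - Complex.exp (2 * π * Complex.I * t / n)) ^ τ *
          Complex.exp (Complex.I * t * (2 * π * j / n)) = 0) ∧
    (∀ (x : ℕ → ℂ) (c : ℂ),
      ∑ t ∈ Finset.Icc 1 n,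
          (1 - Complex.exp (2 * π * Complex.I * t / n)) ^ τ * (x t + c) *
            Complex.exp (Complex.I * t * (2 * π * j / n))
        = ∑ t ∈ Finset.Icc 1 n,
            (1 - Complex.exp (2 * π * Complex.I * t / n)) ^ τ * x t *
              Complex.exp (Complex.I * t * (2 * π * j / n))) := by
  have hn0 : (n : ℂ) ≠ 0 := Nat.cast_ne_zero.mpr (by omega)
  set ζ : ℂ := Complex.exp (2 * π * Complex.I / n) with hζ
  have hζpow : ∀ m : ℕ, ζ ^ m = Complex.exp (2 * π * Complex.I * m / n) := by
    intro m
    rw [hζ, ← Complex.exp_nat_mul]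
    congr 1
    ring
  have key : ∑ t ∈ Finset.Icc 1 n,
      (1 - Complex.exp (2 * π * Complex.I * t / n)) ^ τ *
        Complex.exp (Complex.I * t * (2 * π * j / n)) = 0 := by
    have step1 : ∀ t ∈ Finset.Icc 1 n,
        (1 - Complex.exp (2 * π * Complex.I * t / n)) ^ τ *
          Complex.exp (Complex.I * t * (2 * π * j / n))
        = ∑ k ∈ Finset.range (τ + 1),
            ((-1 : ℂ) ^ k * (τ.choose k : ℂ)) * (ζ ^ (k + j)) ^ t := by
      intro t ht
      have he1 : Complex.exp (2 * π * Complex.I * t / n) = ζ ^ t := (hζpow t).symm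
      have he2 : Complex.exp (Complex.I * t * (2 * π * j / n)) = (ζ ^ j) ^ t := by
        rw [hζ, ← Complex.exp_nat_mul, ← Complex.exp_nat_mul]
        congr 1
        field_simp
      rw [he1, he2, sub_eq_add_neg, add_comm, add_pow, Finset.sum_mul]
      apply Finset.sum_congr rfl
      intro k hk
      have : ((-(ζ ^ t)) ^ k * 1 ^ (τ - k) * (τ.choose k : ℂ)) * (ζ ^ j) ^ t
          = ((-1 : ℂ) ^ k * (τ.choose k : ℂ)) * (ζ ^ (k + j)) ^ t := by
        rw [neg_pow, one_pow, ← pow_mul, ← pow_mul, ← pow_mul, mul_one]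
        rw [show (k + j) * t = t * k + j * t by ring, pow_add]
        ring
      exact this
    rw [Finset.sum_congr rfl step1, Finset.sum_comm]
    apply Finset.sum_eq_zero
    intro k hk
    rw [← Finset.mul_sum]
    have hk' : k ≤ τ := Nat.lt_succ_iff.mp (Finset.mem_range.mp hk)
    have hgeom : ∑ t ∈ Finset.Icc 1 n, (ζ ^ (k + j)) ^ t = 0 := by
      rw [hζpow]
      exact hc_geom_zero n (k + j) (by omega) (by omega)
    rw [hgeom, mul_zero]
  refine ⟨key, fun x c => ?_⟩
  have expand : ∑ t ∈ Finset.Icc 1 n,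
      (1 - Complex.exp (2 * π * Complex.I * t / n)) ^ τ * (x t + c) *
        Complex.exp (Complex.I * t * (2 * π * j / n))
      = (∑ t ∈ Finset.Icc 1 n,
          (1 - Complex.exp (2 * π * Complex.I * t / n)) ^ τ * x t *
            Complex.exp (Complex.I * t * (2 * π * j / n)))
        + c * ∑ t ∈ Finset.Icc 1 n,
            (1 - Complex.exp (2 * π * Complex.I * t / n)) ^ τ *
              Complex.exp (Complex.I * t * (2 * π * j / n)) := by
    rw [Finset.mul_sum, ← Finset.sum_add_distrib]
    apply Finset.sum_congr rfl
    intro t ht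
    ring
  rw [expand, key, mul_zero, add_zero]
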